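/- Upper bound on individual charge (part of Theorem 1(i)): if ε ≥ 0, x_i^0 ≥ 0 for every vertex i, and ∑_{i∈V} x_i^0 = 1, then for every time t and every vertex i, x_i^t ≤ 1. -/

import Mathlib

/-- **Upper bound on individual charge (Theorem 1(i), part).** If `ε ≥ 0`, the initial charges
are nonnegative, and the total initial charge is `1`, then every charge is at most `1` at all
times. -/
theorem charge_upper_bound
    {V : Type*} [Fintype V] [DecidableEq V]
    (G : SimpleGraph V) [DecidableRel G.Adj]
    (hdeg : ∀ i : V, 0 < G.degree i)
    (ε : ℝ) (x : ℕ → V → ℝ)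
    (hupd : ∀ (t : ℕ) (i : V),
      x (t + 1) i =
        (ε + (x t i - ε) / 2) * (if ε < x t i then (1 : ℝ) else 0)
          + x t i * (1 - (if ε < x t i then (1 : ℝ) else 0))
          + (1 / 2) * ∑ j ∈ G.neighborFinset i,
              (if ε < x t j then (1 : ℝ) else 0) * (x t j - ε) / (G.degree j))
    (hε : 0 ≤ ε) (hnn : ∀ i : V, 0 ≤ x 0 i) (hsum : ∑ i, x 0 i = 1) :
    ∀ (t : ℕ) (i : V), x t i ≤ 1 := by
  -- nonnegativity of each neighbor-sum term
  have hterm : ∀ (t : ℕ) (j : V),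
      0 ≤ (if ε < x t j then (1 : ℝ) else 0) * (x t j - ε) / (G.degree j) := by
    intro t j
    split_ifs with h
    · have h1 : (0:ℝ) ≤ 1 * (x t j - ε) := by nlinarith
      exact div_nonneg h1 (Nat.cast_nonneg _)
    · simp
  -- nonnegativity invariant
  have hnn' : ∀ (t : ℕ) (i : V), 0 ≤ x t i := by
    intro t
    induction t with
    | zero => exact hnn
    | succ t ih =>
      intro i
      rw [hupd]
      have hS : 0 ≤ ∑ j ∈ G.neighborFinset i,
          (if ε < x t j then (1:ℝ) else 0) * (x t j - ε) / (G.degree j) :=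
        Finset.sum_nonneg fun j _ => hterm t j
      split_ifs with h
      · nlinarith [ih i]
      · nlinarith [ih i]
  -- double-sum swap
  have hdouble : ∀ (t : ℕ),
      ∑ i : V, ∑ j ∈ G.neighborFinset i,
          (if ε < x t j then (1 : ℝ) else 0) * (x t j - ε) / (G.degree j)
        = ∑ j : V, (if ε < x t j then (1 : ℝ) else 0) * (x t j - ε) := by
    intro t
    have h1 : ∀ i : V, ∑ j ∈ G.neighborFinset i,
        (if ε < x t j then (1 : ℝ) else 0) * (x t j - ε) / (G.degree j)
        = ∑ j : V, if G.Adj i j then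
            (if ε < x t j then (1 : ℝ) else 0) * (x t j - ε) / (G.degree j) else 0 := by
      intro i
      rw [SimpleGraph.neighborFinset_eq_filter, Finset.sum_filter]
    simp_rw [h1]
    rw [Finset.sum_comm]
    refine Finset.sum_congr rfl fun j _ => ?_
    have h2 : ∑ i : V, (if G.Adj i j then
        (if ε < x t j then (1 : ℝ) else 0) * (x t j - ε) / (G.degree j) else 0)
        = (Finset.univ.filter fun i => G.Adj i j).card •
            ((if ε < x t j then (1 : ℝ) else 0) * (x t j - ε) / (G.degree j)) := by
      rw [← Finset.sum_filter, Finset.sum_const]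
    rw [h2]
    have hcard : (Finset.univ.filter fun i => G.Adj i j).card = G.degree j := by
      rw [SimpleGraph.degree, SimpleGraph.neighborFinset_eq_filter]
      congr 1
      ext i
      simp [SimpleGraph.adj_comm]
    rw [hcard, nsmul_eq_mul]
    have hd : (G.degree j : ℝ) ≠ 0 := by
      exact_mod_cast (hdeg j).ne'
    field_simp
  -- sum invariant
  have hsum' : ∀ t : ℕ, ∑ i, x t i = 1 := by
    intro t
    induction t with
    | zero => exact hsum
    | succ t ih =>
      have key : ∑ i, x (t+1) i = ∑ i, x t i := by
        have hA : ∀ i : V,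
            (ε + (x t i - ε) / 2) * (if ε < x t i then (1 : ℝ) else 0)
              + x t i * (1 - (if ε < x t i then (1 : ℝ) else 0))
            = x t i - (if ε < x t i then (1 : ℝ) else 0) * (x t i - ε) / 2 := by
          intro i
          split_ifs <;> ring
        calc ∑ i, x (t+1) i
            = ∑ i, ((x t i - (if ε < x t i then (1 : ℝ) else 0) * (x t i - ε) / 2)
                + (1/2) * ∑ j ∈ G.neighborFinset i,
                    (if ε < x t j then (1 : ℝ) else 0) * (x t j - ε) / (G.degree j)) := by
              refine Finset.sum_congr rfl fun i _ => ?_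
              rw [hupd, ← hA]
          _ = (∑ i, (x t i - (if ε < x t i then (1 : ℝ) else 0) * (x t i - ε) / 2))
                + (1/2) * ∑ i : V, ∑ j ∈ G.neighborFinset i,
                    (if ε < x t j then (1 : ℝ) else 0) * (x t j - ε) / (G.degree j) := by
              rw [Finset.sum_add_distrib, Finset.mul_sum]
          _ = ∑ i, x t i := by
              rw [hdouble t, Finset.sum_sub_distrib]
              rw [← Finset.sum_div]
              ring
      rw [key, ih]
  intro t i
  calc x t i ≤ ∑ j, x t j :=
        Finset.single_le_sum (fun j _ => hnn' t j) (Finset.mem_univ i)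
    _ = 1 := hsum' t
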